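/- Let g(z) = Σ_{j=1}^t e^{a_j z + b_j} with real frequencies a_1 < ... < a_t, t ≥ 2, and coefficients b_j ∈ ℂ. Define δ(g) := min_{p≠q} |a_p − a_q| and Trop(g) := { w ∈ ℝ : max_j e^{a_j w + Re(b_j)} is attained for at least two distinct indices j }. Let w_max := max Trop(g). Then every complex root ζ of g satisfies Re(ζ) < w_max + log 2 / δ(g). -/

import Mathlib

noncomputable section

/-- The Archimedean tropical variety of a univariate exponential sum:
points where the maximum of `a j * w + Re (b j)` is attained at least twice. -/
def Trop (t : ℕ) (a : Fin t → ℝ) (b : Fin t → ℂ) : Set ℝ :=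
  {w | ∃ j k : Fin t, j ≠ k ∧
    (∀ i : Fin t, a i * w + (b i).re ≤ a j * w + (b j).re) ∧
    a j * w + (b j).re = a k * w + (b k).re}

/-- every complex root of a univariate exponential `t`-sum has real part
less than `max Trop(g) + log 2 / δ(g)`. -/
theorem re_root_lt_max_trop (t : ℕ) (ht : 2 ≤ t) (a : Fin t → ℝ) (b : Fin t → ℂ)
    (ha : StrictMono a) (δ : ℝ)
    (hδ : IsLeast {d : ℝ | ∃ p q : Fin t, p ≠ q ∧ d = |a p - a q|} δ)
    (wmax : ℝ) (hwmax : IsGreatest (Trop t a b) wmax)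
    (ζ : ℂ) (hζ : ∑ j, Complex.exp (a j * ζ + b j) = 0) :
    ζ.re < wmax + Real.log 2 / δ := by
  by_contra hcon
  push_neg at hcon
  obtain ⟨hmem, hlb⟩ := hδ
  have h2pos : (0:ℝ) < Real.log 2 := Real.log_pos (by norm_num)
  have hδ0 : 0 < δ := by
    obtain ⟨p, q, hpq, hd⟩ := hmem
    rw [hd]
    exact abs_pos.mpr (sub_ne_zero.mpr fun h => hpq (ha.injective h))
  -- gap estimate
  have key : ∀ m : ℕ, ∀ j k : Fin t, (k:ℕ) = (j:ℕ) + m → δ * m ≤ a k - a j := by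
    intro m
    induction m with
    | zero =>
      intro j k hk
      have : j = k := Fin.ext (by omega)
      simp [this]
    | succ n ih =>
      intro j k hk
      have hk2 := k.isLt
      have hk' : (j:ℕ) + n < t := by omega
      set k' : Fin t := ⟨(j:ℕ) + n, hk'⟩ with hk'def
      have h1 : δ * n ≤ a k' - a j := ih j k' rfl
      have hlt : k' < k := by rw [Fin.lt_def]; simp only [hk'def]; omega
      have h2 : δ ≤ a k - a k' := by
        have hm2 : |a k - a k'| ∈ {d : ℝ | ∃ p q : Fin t, p ≠ q ∧ d = |a p - a q|} :=
          ⟨k, k', hlt.ne', rfl⟩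
        have := hlb hm2
        rwa [abs_of_pos (sub_pos.mpr (ha hlt))] at this
      have hring : δ * ((n:ℝ) + 1) = δ * n + δ := by ring
      push_cast
      linarith
  have ht1 : t - 1 < t := by omega
  set L : Fin t := ⟨t-1, ht1⟩ with hL
  have hjL : ∀ j : Fin t, j ≠ L → (j:ℕ) < t - 1 := by
    intro j hj
    have := j.isLt
    by_contra h
    exact hj (Fin.ext (by simp [hL]; omega))
  have haj : ∀ j : Fin t, j ≠ L → a j < a L := by
    intro j hj
    exact ha (by rw [Fin.lt_def]; simpa [hL] using hjL j hj)
  set x : Fin t → ℝ := fun j => ((b j).re - (b L).re) / (a L - a j) with hx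
  have hid : ∀ j : Fin t, j ≠ L → ∀ w : ℝ,
      (a L * w + (b L).re) - (a j * w + (b j).re) = (a L - a j) * (w - x j) := by
    intro j hj w
    have hne : a L - a j ≠ 0 := sub_ne_zero.mpr (haj j hj).ne'
    rw [hx]
    field_simp
    ring
  have hE : (Finset.univ.erase L).Nonempty := by
    refine ⟨⟨0, by omega⟩, Finset.mem_erase.mpr ⟨?_, Finset.mem_univ _⟩⟩
    intro h
    have := congrArg Fin.val h
    simp [hL] at this
    omega
  set w' : ℝ := (Finset.univ.erase L).sup' hE x with hw'
  have claimA : ∀ j ∈ Finset.univ.erase L, ∀ w : ℝ, x j ≤ w →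
      a j * w + (b j).re ≤ a L * w + (b L).re := by
    intro j hj w hwle
    have hjne : j ≠ L := (Finset.mem_erase.mp hj).1
    have h0 : 0 ≤ (a L - a j) * (w - x j) :=
      mul_nonneg (sub_pos.mpr (haj j hjne)).le (sub_nonneg.mpr hwle)
    have := hid j hjne w
    linarith
  have claimB : w' ∈ Trop t a b := by
    obtain ⟨j0, hj0E, hj0⟩ := Finset.exists_mem_eq_sup' hE x
    refine ⟨L, j0, ((Finset.mem_erase.mp hj0E).1).symm, ?_, ?_⟩
    · intro i
      by_cases hi : i = L
      · subst hi; exact le_rfl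
      · exact claimA i (Finset.mem_erase.mpr ⟨hi, Finset.mem_univ i⟩) w'
          (Finset.le_sup' x (Finset.mem_erase.mpr ⟨hi, Finset.mem_univ i⟩))
    · have hd := hid j0 (Finset.mem_erase.mp hj0E).1 w'
      have : w' - x j0 = 0 := by rw [hw', hj0]; ring
      rw [this, mul_zero] at hd
      linarith
  have hw'max : w' ≤ wmax := hwmax.2 claimB
  have hrw : wmax ≤ ζ.re := le_trans (le_add_of_nonneg_right (by positivity)) hcon
  -- quantitative bound at r = ζ.re
  have claimC : ∀ j ∈ Finset.univ.erase L,
      a j * ζ.re + (b j).re + ((t - 1 - (j:ℕ) : ℕ):ℝ) * Real.log 2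
        ≤ a L * ζ.re + (b L).re := by
    intro j hjE
    have hjne : j ≠ L := (Finset.mem_erase.mp hjE).1
    have hgapj : δ * ((t - 1 - (j:ℕ) : ℕ):ℝ) ≤ a L - a j := by
      refine key (t - 1 - (j:ℕ)) j L ?_
      have := hjL j hjne
      simp only [hL]
      omega
    have hxj : x j ≤ wmax := le_trans (Finset.le_sup' x hjE) hw'max
    have hrx : Real.log 2 / δ ≤ ζ.re - x j := by linarith
    have hprod : (δ * ((t - 1 - (j:ℕ) : ℕ):ℝ)) * (Real.log 2 / δ)
        ≤ (a L - a j) * (ζ.re - x j) :=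
      mul_le_mul hgapj hrx (by positivity) (sub_pos.mpr (haj j hjne)).le
    have hcalc : (δ * ((t - 1 - (j:ℕ) : ℕ):ℝ)) * (Real.log 2 / δ)
        = ((t - 1 - (j:ℕ) : ℕ):ℝ) * Real.log 2 := by
      field_simp
    have := hid j hjne ζ.re
    linarith
  -- split the vanishing sum
  have hsplit : Complex.exp ((a L : ℂ) * ζ + b L)
      = -∑ j ∈ Finset.univ.erase L, Complex.exp ((a j : ℂ) * ζ + b j) := by
    apply eq_neg_of_add_eq_zero_left
    rw [Finset.add_sum_erase _ (fun j : Fin t => Complex.exp ((a j : ℂ) * ζ + b j)) (Finset.mem_univ L)]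
    exact hζ
  have hre : ∀ j : Fin t, ((a j : ℂ) * ζ + b j).re = a j * ζ.re + (b j).re := by
    intro j; simp [Complex.add_re, Complex.mul_re]
  have hnorm1 : Real.exp (a L * ζ.re + (b L).re)
      ≤ ∑ j ∈ Finset.univ.erase L, Real.exp (a j * ζ.re + (b j).re) := by
    calc Real.exp (a L * ζ.re + (b L).re)
        = ‖Complex.exp ((a L : ℂ) * ζ + b L)‖ := by
          rw [Complex.norm_exp, hre]
      _ = ‖∑ j ∈ Finset.univ.erase L, Complex.exp ((a j : ℂ) * ζ + b j)‖ := by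
          rw [hsplit, norm_neg]
      _ ≤ ∑ j ∈ Finset.univ.erase L, ‖Complex.exp ((a j : ℂ) * ζ + b j)‖ :=
          norm_sum_le _ _
      _ = ∑ j ∈ Finset.univ.erase L, Real.exp (a j * ζ.re + (b j).re) := by
          exact Finset.sum_congr rfl fun j _ => by rw [Complex.norm_exp, hre]
  have hexp2 : ∀ k : ℕ, Real.exp ((k:ℝ) * Real.log 2) = 2 ^ k := by
    intro k
    rw [Real.exp_nat_mul, Real.exp_log (by norm_num)]
  have hterm : ∀ j ∈ Finset.univ.erase L,
      Real.exp (a j * ζ.re + (b j).re)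
        ≤ Real.exp (a L * ζ.re + (b L).re) * ((1:ℝ)/2) ^ (t - 1 - (j:ℕ)) := by
    intro j hj
    have hC := claimC j hj
    have h1 : Real.exp (a j * ζ.re + (b j).re)
        ≤ Real.exp (a L * ζ.re + (b L).re - ((t - 1 - (j:ℕ) : ℕ):ℝ) * Real.log 2) :=
      Real.exp_le_exp.mpr (by linarith)
    rw [Real.exp_sub, hexp2] at h1
    calc Real.exp (a j * ζ.re + (b j).re)
        ≤ Real.exp (a L * ζ.re + (b L).re) / 2 ^ (t - 1 - (j:ℕ)) := h1
      _ = Real.exp (a L * ζ.re + (b L).re) * ((1:ℝ)/2) ^ (t - 1 - (j:ℕ)) := by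
          rw [div_pow, one_pow]; ring
  have hgeom : ∑ j ∈ Finset.univ.erase L, ((1:ℝ)/2) ^ (t - 1 - (j:ℕ)) < 1 := by
    have hfull : ∑ j : Fin t, ((1:ℝ)/2) ^ (t - 1 - (j:ℕ))
        = ∑ j : Fin t, ((1:ℝ)/2) ^ (j:ℕ) := by
      refine Fintype.sum_bijective Fin.rev Fin.rev_bijective _ _ fun j => ?_
      congr 1
      rw [Fin.val_rev]
      omega
    have hrange : ∑ j : Fin t, ((1:ℝ)/2) ^ (j:ℕ)
        = ∑ k ∈ Finset.range t, ((1:ℝ)/2) ^ k := Fin.sum_univ_eq_sum_range _ _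
    have hgs : ∑ k ∈ Finset.range t, ((1:ℝ)/2) ^ k
        = (((1:ℝ)/2) ^ t - 1) / ((1:ℝ)/2 - 1) := geom_sum_eq (by norm_num) t
    have hLterm : ((1:ℝ)/2) ^ (t - 1 - ((L:ℕ))) = 1 := by
      simp [hL]
    have hsplit2 : ∑ j ∈ Finset.univ.erase L, ((1:ℝ)/2) ^ (t - 1 - (j:ℕ))
        = (∑ j : Fin t, ((1:ℝ)/2) ^ (t - 1 - (j:ℕ))) - 1 := by
      rw [← Finset.add_sum_erase _ _ (Finset.mem_univ L), hLterm]
      ring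
    have hp : (0:ℝ) < ((1:ℝ)/2) ^ t := by positivity
    rw [hsplit2, hfull, hrange, hgs]
    have : (((1:ℝ)/2) ^ t - 1) / ((1:ℝ)/2 - 1) = 2 - 2 * ((1:ℝ)/2) ^ t := by
      field_simp
      ring
    rw [this]
    linarith
  have hsum2 : ∑ j ∈ Finset.univ.erase L, Real.exp (a j * ζ.re + (b j).re)
      ≤ Real.exp (a L * ζ.re + (b L).re)
        * ∑ j ∈ Finset.univ.erase L, ((1:ℝ)/2) ^ (t - 1 - (j:ℕ)) := by
    rw [Finset.mul_sum]
    exact Finset.sum_le_sum hterm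
  have hep : (0:ℝ) < Real.exp (a L * ζ.re + (b L).re) := Real.exp_pos _
  nlinarith [hnorm1, hsum2, hgeom, hep]
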